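/- Let G be a finite p-group of nilpotency class 2 such that the rank of G/Z(G) is strictly less than the rank of G/γ₂(G). Then every central automorphism group inclusion Aut^{Z(G)}_{Z(G)}(G) ⊆ Autcent(G) is strict, i.e., there exists a central automorphism of G not fixing Z(G) element-wise. -/

import Mathlib

/-- If G is a finite p-group of class 2 with rank(G/Z(G)) < rank(G/γ₂(G)), then
there is a central automorphism of G not fixing Z(G) element-wise. -/
theorem stmt14 {p : ℕ} [Fact p.Prime] {G : Type*} [Group G] [Finite G]
    (hp : IsPGroup p G)
    (h2 : commutator G ≤ Subgroup.center G) (hna : commutator G ≠ ⊥)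
    (hrank : Group.rank (G ⧸ Subgroup.center G) < Group.rank (G ⧸ commutator G)) :
    ∃ α : MulAut G, (∀ x : G, x⁻¹ * α x ∈ Subgroup.center G) ∧
      ∃ z ∈ Subgroup.center G, α z ≠ z := by
  classical
  have hpprime := (Fact.out : p.Prime)
  -- Step A: there is a maximal subgroup M with center ⊄ M
  obtain ⟨M, hM, hZM⟩ : ∃ M : Subgroup G, IsCoatom M ∧ ¬ Subgroup.center G ≤ M := by
    by_contra hcon
    push_neg at hcon
    have key : Group.rank G ≤ Group.rank (G ⧸ Subgroup.center G) := by
      obtain ⟨S, hScard, hSclos⟩ := Group.rank_spec (G ⧸ Subgroup.center G)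
      set π := QuotientGroup.mk' (Subgroup.center G) with hπdef
      have hπ : Function.Surjective π := QuotientGroup.mk'_surjective _
      set T : Finset G := S.image (Function.surjInv hπ) with hT
      have himg : ⇑π '' (T : Set G) = (S : Set (G ⧸ Subgroup.center G)) := by
        rw [hT, Finset.coe_image, ← Set.image_comp]
        have : ⇑π ∘ Function.surjInv hπ = id := funext (Function.rightInverse_surjInv hπ)
        rw [this, Set.image_id]
      have hTclos : Subgroup.closure (T : Set G) = ⊤ := by
        by_contra hne
        obtain ⟨N, hN, hle⟩ :=
          (eq_top_or_exists_le_coatom (Subgroup.closure (T : Set G))).resolve_left hne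
        have hTN : (T : Set G) ⊆ (N : Set G) := le_trans Subgroup.subset_closure hle
        have hsub : (S : Set (G ⧸ Subgroup.center G)) ⊆ ↑(Subgroup.map π N) := by
          rw [← himg]; exact Set.image_mono hTN
        have hmap : Subgroup.map π N = ⊤ :=
          top_unique (hSclos ▸ (Subgroup.closure_le _).2 hsub)
        have hker : π.ker = Subgroup.center G := QuotientGroup.ker_mk' _
        have : N = ⊤ := by
          have h1 : Subgroup.comap π (Subgroup.map π N) = N ⊔ π.ker :=
            Subgroup.comap_map_eq π N
          rw [hmap, Subgroup.comap_top, hker, sup_eq_left.2 (hcon N hN)] at h1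
          exact h1.symm
        exact hN.1 this
      calc Group.rank G ≤ T.card := Group.rank_le hTclos
        _ ≤ S.card := Finset.card_image_le
        _ = _ := hScard
    have key2 : Group.rank (G ⧸ commutator G) ≤ Group.rank G :=
      Group.rank_le_of_surjective (QuotientGroup.mk' _) (QuotientGroup.mk'_surjective _)
    omega
  obtain ⟨z, hzZ, hzM⟩ : ∃ z ∈ Subgroup.center G, z ∉ M := by
    by_contra hc; push_neg at hc; exact hZM hc
  -- Step B: M is normal
  have hMnormal : M.Normal := by
    rw [← Subgroup.normalizer_eq_top_iff]
    have hsup : M ⊔ Subgroup.center G = ⊤ := by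
      refine hM.2 _ (lt_of_le_of_ne le_sup_left ?_)
      intro h
      exact hzM (h ▸ le_sup_right (α := Subgroup G) hzZ)
    refine top_le_iff.mp ?_
    calc (⊤ : Subgroup G) = M ⊔ Subgroup.center G := hsup.symm
      _ ≤ Subgroup.normalizer (M : Set G) := sup_le Subgroup.le_normalizer (Subgroup.center_le_normalizer _)
    -- Step C: Q := G ⧸ M has order p, generated by the image of z
  let χ : G →* G ⧸ M := QuotientGroup.mk' M
  have hχ : Function.Surjective χ := QuotientGroup.mk'_surjective M
  have hkerχ : χ.ker = M := QuotientGroup.ker_mk' M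
  set zb : G ⧸ M := χ z with hzbdef
  have hzb1 : zb ≠ 1 := by
    rw [hzbdef, Ne, ← MonoidHom.mem_ker, hkerχ]; exact hzM
  have hmemM : ∀ x : G, x ∈ M ↔ χ x = 1 := by
    intro x; rw [← MonoidHom.mem_ker, hkerχ]
  have hzbp : zb ^ p = 1 := by
    set S := Subgroup.comap χ (Subgroup.zpowers (zb ^ p)) with hSdef
    have hMS : M ≤ S := by
      intro m hm
      rw [hSdef, Subgroup.mem_comap, (hmemM m).mp hm]
      exact Subgroup.one_mem _
    rcases eq_or_lt_of_le hMS with heq | hlt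
    · have hzpS : z ^ p ∈ S := by
        rw [hSdef, Subgroup.mem_comap, map_pow]
        exact Subgroup.mem_zpowers _
      rw [← heq] at hzpS
      have := (hmemM _).mp hzpS
      rwa [map_pow] at this
    · exfalso
      have hStop : S = ⊤ := hM.2 _ hlt
      have hzS : z ∈ S := hStop ▸ Subgroup.mem_top z
      obtain ⟨k, hk⟩ := Subgroup.mem_comap.mp hzS
      have hk' : zb ^ ((p : ℤ) * k) = zb := by
        rw [zpow_mul, zpow_natCast]; exact hk
      have hone : zb ^ ((p : ℤ) * k - 1) = 1 := by
        rw [zpow_sub, hk', zpow_one, mul_inv_cancel]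
      have hdvd : ((orderOf zb : ℤ)) ∣ ((p : ℤ) * k - 1) :=
        orderOf_dvd_iff_zpow_eq_one.mpr hone
      obtain ⟨n, hn⟩ := (hp.to_quotient M) zb
      have hdvd2 : orderOf zb ∣ p ^ n := orderOf_dvd_of_pow_eq_one hn
      obtain ⟨j, hjn, hj⟩ := (Nat.dvd_prime_pow hpprime).mp hdvd2
      have hj1 : j ≠ 0 := by
        rintro rfl
        rw [pow_zero] at hj
        exact hzb1 (orderOf_eq_one_iff.mp hj)
      have hpo : p ∣ orderOf zb := hj ▸ dvd_pow_self p hj1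
      have : (p : ℤ) ∣ 1 := by
        have h1 : (p : ℤ) ∣ (p : ℤ) * k - 1 :=
          dvd_trans (Int.natCast_dvd_natCast.mpr hpo) hdvd
        have h2 : (p : ℤ) ∣ (p : ℤ) * k := Dvd.intro k rfl
        have := dvd_sub h2 h1
        simpa using this
      have h3 := Int.le_of_dvd one_pos this
      have h4 := hpprime.two_le
      omega
  have horder : orderOf zb = p := orderOf_eq_prime hzbp hzb1
  have hzptop : Subgroup.zpowers zb = ⊤ := by
    set S := Subgroup.comap χ (Subgroup.zpowers zb) with hSdef
    have hMS : M ≤ S := by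
      intro m hm
      rw [hSdef, Subgroup.mem_comap, (hmemM m).mp hm]
      exact Subgroup.one_mem _
    have hzS : z ∈ S := by
      rw [hSdef, Subgroup.mem_comap]; exact Subgroup.mem_zpowers _
    have hlt : M < S := lt_of_le_of_ne hMS (fun h => hzM (h ▸ hzS))
    have hStop : S = ⊤ := hM.2 _ hlt
    have := congrArg (Subgroup.map χ) hStop
    rwa [hSdef, Subgroup.map_comap_eq_self_of_surjective hχ,
      Subgroup.map_top_of_surjective χ hχ] at this
  have hcardQ : Nat.card (G ⧸ M) = p := by
    rw [← Subgroup.card_top, ← hzptop, Nat.card_zpowers, horder]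
  -- Step D: the commutator subgroup is inside M; find w ∈ center ∩ M of order p
  have hcomm : ∀ a b : G ⧸ M, a * b = b * a := by
    intro a b
    have ha : a ∈ Subgroup.zpowers zb := hzptop ▸ Subgroup.mem_top a
    have hb : b ∈ Subgroup.zpowers zb := hzptop ▸ Subgroup.mem_top b
    obtain ⟨m, rfl⟩ := ha
    obtain ⟨n, rfl⟩ := hb
    exact zpow_mul_comm zb m n
  have hcommM : commutator G ≤ M := by
    rw [commutator_def, Subgroup.commutator_le]
    intro g₁ _ g₂ _
    rw [hmemM, map_commutatorElement]
    rw [commutatorElement_def, hcomm (χ g₁) (χ g₂)]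
    group
  obtain ⟨v, hvC, hv1⟩ := (commutator G).bot_or_exists_ne_one.resolve_left hna
  have hvZ : v ∈ Subgroup.center G := h2 hvC
  have hvM : v ∈ M := hcommM hvC
  obtain ⟨n, hn⟩ := hp v
  obtain ⟨j, hjn, hj⟩ := (Nat.dvd_prime_pow hpprime).mp (orderOf_dvd_of_pow_eq_one hn)
  have hj1 : j ≠ 0 := by
    rintro rfl
    rw [pow_zero] at hj
    exact hv1 (orderOf_eq_one_iff.mp hj)
  set w : G := v ^ (p ^ (j - 1)) with hwdef
  have hw1 : w ≠ 1 := by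
    rw [hwdef, Ne, ← orderOf_dvd_iff_pow_eq_one, hj]
    intro hdvd
    have := (Nat.pow_dvd_pow_iff_le_right hpprime.one_lt).mp hdvd
    omega
  have hwp : w ^ p = 1 := by
    rw [hwdef, ← pow_mul, ← pow_succ]
    have : j - 1 + 1 = j := by omega
    rw [this, ← hj, pow_orderOf_eq_one]
  have hwZ : w ∈ Subgroup.center G := Subgroup.pow_mem _ hvZ _
  have hwM : w ∈ M := Subgroup.pow_mem _ hvM _
  have horderw : orderOf w = p := orderOf_eq_prime hwp hw1
  -- Step E: build the homomorphism ψ : G ⧸ M →* G with image in ⟨w⟩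
  have hcyc : IsCyclic (G ⧸ M) := isCyclic_of_prime_card hcardQ
  let e : Multiplicative (ZMod (Nat.card (G ⧸ M))) ≃* (G ⧸ M) := zmodCyclicMulEquiv hcyc
  let fw : ℤ →+ Additive G := zmultiplesHom (Additive G) (Additive.ofMul w)
  have hfw : fw ((Nat.card (G ⧸ M)) : ℤ) = 0 := by
    show ((Nat.card (G ⧸ M) : ℤ) • Additive.ofMul w) = 0
    rw [← ofMul_zpow, zpow_natCast, hcardQ, hwp]; rfl
  let L : ZMod (Nat.card (G ⧸ M)) →+ Additive G := ZMod.lift _ ⟨fw, hfw⟩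
  let ψ1 : Multiplicative (ZMod (Nat.card (G ⧸ M))) →* G := AddMonoidHom.toMultiplicativeLeft L
  let ψ : (G ⧸ M) →* G := ψ1.comp e.symm.toMonoidHom
  have hψ1 : ∀ x : Multiplicative (ZMod (Nat.card (G ⧸ M))),
      ∃ k : ℤ, (Multiplicative.toAdd x = (k : ZMod (Nat.card (G ⧸ M)))) ∧ ψ1 x = w ^ k := by
    intro x
    obtain ⟨k, hk⟩ := ZMod.intCast_surjective (Multiplicative.toAdd x)
    refine ⟨k, hk.symm, ?_⟩
    show Additive.toMul (L (Multiplicative.toAdd x)) = w ^ k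
    rw [← hk]
    have : L ((k : ℤ) : ZMod (Nat.card (G ⧸ M))) = fw k := ZMod.lift_coe _ _ _
    rw [this]
    show Additive.toMul ((k : ℤ) • Additive.ofMul w) = w ^ k
    rw [← ofMul_zpow]
    rfl
  have hψval : ∀ q : G ⧸ M, ∃ k : ℤ, ψ q = w ^ k := by
    intro q
    obtain ⟨k, _, hk⟩ := hψ1 (e.symm q)
    exact ⟨k, hk⟩
  have hψZ : ∀ q : G ⧸ M, ψ q ∈ Subgroup.center G := by
    intro q
    obtain ⟨k, hk⟩ := hψval q
    rw [hk]; exact Subgroup.zpow_mem _ hwZ _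
  have hψM : ∀ q : G ⧸ M, ψ q ∈ M := by
    intro q
    obtain ⟨k, hk⟩ := hψval q
    rw [hk]; exact Subgroup.zpow_mem _ hwM _
  have hψzb : ψ zb ≠ 1 := by
    intro h
    obtain ⟨k, hk1, hk2⟩ := hψ1 (e.symm zb)
    have hwk : w ^ k = 1 := by
      rw [← hk2]; exact h
    have hdvd : ((orderOf w : ℤ)) ∣ k := orderOf_dvd_iff_zpow_eq_one.mpr hwk
    rw [horderw] at hdvd
    have h0 : ((k : ℤ) : ZMod (Nat.card (G ⧸ M))) = 0 := by
      rw [ZMod.intCast_zmod_eq_zero_iff_dvd, hcardQ]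
      exact hdvd
    have hz0 : Multiplicative.toAdd (e.symm zb) = 0 := by rw [hk1, h0]
    have : e.symm zb = 1 := by
      have := congrArg Multiplicative.ofAdd hz0
      simpa using this
    have := congrArg e this
    rw [MulEquiv.apply_symm_apply, map_one] at this
    exact hzb1 this
  -- Step F: the central automorphism
  let F : G →* G :=
    { toFun := fun x => x * ψ (χ x)
      map_one' := by simp
      map_mul' := fun x y => by
        have hc : y * ψ (χ x) = ψ (χ x) * y :=
          (Subgroup.mem_center_iff.mp (hψZ (χ x))) y
        simp only [map_mul]
        calc x * y * (ψ (χ x) * ψ (χ y)) = x * ((y * ψ (χ x)) * ψ (χ y)) := by group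
          _ = x * ((ψ (χ x) * y) * ψ (χ y)) := by rw [hc]
          _ = x * ψ (χ x) * (y * ψ (χ y)) := by group }
  have hFapply : ∀ x : G, F x = x * ψ (χ x) := fun _ => rfl
  have hinj : Function.Injective F := by
    rw [injective_iff_map_eq_one]
    intro x hx
    rw [hFapply] at hx
    have hxM : x ∈ M := by
      have hxe : x = (ψ (χ x))⁻¹ := eq_inv_of_mul_eq_one_left hx
      rw [hxe]; exact M.inv_mem (hψM _)
    have hχx : χ x = 1 := (hmemM x).mp hxM
    rw [hχx, map_one, mul_one] at hx
    exact hx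
  let α : MulAut G := MulEquiv.ofBijective F (Finite.injective_iff_bijective.mp hinj)
  have hαapply : ∀ x : G, α x = x * ψ (χ x) := fun _ => rfl
  refine ⟨α, fun x => ?_, z, hzZ, ?_⟩
  · rw [hαapply, ← mul_assoc, inv_mul_cancel, one_mul]
    exact hψZ _
  · rw [hαapply]
    intro h
    exact hψzb (mul_eq_left.mp h)
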